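/- In the GDD construction of a pentagonal geometry (placing PENT(k,r_i) on each group of a k-GDD of type v_1^1⋯v_n^1 with v_i = (k-1)r_i+(k+1) and adjoining the GDD blocks), the number of opposite line pairs of the resulting pentagonal geometry equals the sum of the numbers of opposite line pairs of the constituent geometries PENT(k,r_i). -/

import Mathlib

open scoped Classical

/-- A pentagonal geometry PENT(k,r). -/
structure PentGeom (V : Type) [Fintype V] [DecidableEq V] (k r : ℕ) : Type where
  lines : Finset (Finset V)
  size_pos : 2 ≤ k
  rep_pos : 1 ≤ r
  pairwise : ∀ x y : V, x ≠ y → (lines.filter (fun l => x ∈ l ∧ y ∈ l)).card ≤ 1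
  uniform : ∀ l ∈ lines, l.card = k
  regular : ∀ x : V, (lines.filter (fun l => x ∈ l)).card = r
  opp : ∀ x : V,
    (Finset.univ.filter (fun y => y ≠ x ∧ ∀ l ∈ lines, ¬(x ∈ l ∧ y ∈ l))) ∈ lines

variable {V : Type} [Fintype V] [DecidableEq V] {k r : ℕ}

/-- The opposite line of a point. -/
def PentGeom.oppLine (P : PentGeom V k r) (x : V) : Finset V :=
  Finset.univ.filter (fun y => y ≠ x ∧ ∀ l ∈ P.lines, ¬(x ∈ l ∧ y ∈ l))

/-- Two points are collinear if some line contains both. -/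
def PentGeom.Collinear (P : PentGeom V k r) (x y : V) : Prop :=
  x ≠ y ∧ ∃ l ∈ P.lines, x ∈ l ∧ y ∈ l

/-- An opposite line pair. -/
def PentGeom.OppPair (P : PentGeom V k r) (l m : Finset V) : Prop :=
  l ∈ P.lines ∧ m ∈ P.lines ∧ l ≠ m ∧
    (∀ x ∈ l, P.oppLine x = m) ∧ (∀ y ∈ m, P.oppLine y = l)

/-- A k-group divisible design. -/
structure GDDesign (V : Type) [Fintype V] [DecidableEq V] (k : ℕ) : Type where
  groups : Finset (Finset V)
  blocks : Finset (Finset V)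
  groupsPartition : ∀ x : V, (groups.filter (fun g => x ∈ g)).card = 1
  blockSize : ∀ b ∈ blocks, b.card = k
  cover : ∀ x y : V, x ≠ y →
    (groups.filter (fun g => x ∈ g ∧ y ∈ g)).card +
      (blocks.filter (fun b => x ∈ b ∧ y ∈ b)).card = 1

variable {V : Type} [Fintype V] [DecidableEq V]

/-- The opposite line of `x` relative to a family of lines `L` on a point set `W`. -/
noncomputable def oppLineIn (L : Finset (Finset V)) (W : Finset V) (x : V) : Finset V :=
  W.filter (fun y => y ≠ x ∧ ∀ l ∈ L, ¬(x ∈ l ∧ y ∈ l))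

/-- A pentagonal geometry PENT(k,r) with line family `L` on the point set `W`. -/
def IsPentOn (W : Finset V) (k r : ℕ) (L : Finset (Finset V)) : Prop :=
  (∀ l ∈ L, l ⊆ W ∧ l.card = k) ∧
  (∀ x y : V, x ∈ W → y ∈ W → x ≠ y → (L.filter (fun l => x ∈ l ∧ y ∈ l)).card ≤ 1) ∧
  (∀ x ∈ W, (L.filter (fun l => x ∈ l)).card = r) ∧
  (∀ x ∈ W, oppLineIn L W x ∈ L)

/-- The ordered opposite line pairs of the line family `L` on point set `W`;
the cardinality is twice the number of (unordered) opposite line pairs. -/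
noncomputable def olpOrderedIn (L : Finset (Finset V)) (W : Finset V) :
    Finset (Finset V × Finset V) :=
  (L ×ˢ L).filter (fun p => p.1 ≠ p.2 ∧
    (∀ x ∈ p.1, oppLineIn L W x = p.2) ∧ (∀ y ∈ p.2, oppLineIn L W y = p.1))

/-- in the GDD construction (a PENT(k,rᵢ) on each group of a k-GDD of type
v₁¹⋯vₙ¹, vᵢ = (k-1)rᵢ+(k+1), together with the GDD blocks), the number of opposite line
pairs of the resulting pentagonal geometry is the sum of the numbers of opposite line
pairs of the constituents. -/
theorem stmt13 (k : ℕ) (hk : 2 ≤ k) (n : ℕ) (r : Fin n → ℕ) (hr : ∀ i, 1 ≤ r i)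
    (v : Fin n → ℕ) (hv : ∀ i, v i = (k - 1) * r i + (k + 1))
    (D : GDDesign V k)
    (f : Fin n → Finset V) (hf : Function.Injective f)
    (hgroups : D.groups = Finset.image f Finset.univ)
    (hsizes : ∀ i, (f i).card = v i)
    (L : Fin n → Finset (Finset V)) (hL : ∀ i, IsPentOn (f i) k (r i) (L i))
    (R : ℕ) (P : PentGeom V k R)
    (hlines : P.lines = D.blocks ∪ Finset.univ.biUnion L) :
    (olpOrderedIn P.lines Finset.univ).card = ∑ i, (olpOrderedIn (L i) (f i)).card := by
  classical
  have hLsub : ∀ i, L i ⊆ P.lines := by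
    intro i l hl
    rw [hlines]
    exact Finset.mem_union_right _ (Finset.mem_biUnion.2 ⟨i, Finset.mem_univ i, hl⟩)
  have hgrp_mem : ∀ i, f i ∈ D.groups := by
    intro i; rw [hgroups]; exact Finset.mem_image_of_mem f (Finset.mem_univ i)
  have hex : ∀ x : V, ∃ i, x ∈ f i := by
    intro x
    have h := D.groupsPartition x
    have hne : (D.groups.filter (fun g => x ∈ g)).Nonempty := by
      rw [← Finset.card_pos, h]; norm_num
    obtain ⟨g, hg⟩ := hne
    rw [Finset.mem_filter, hgroups] at hg
    obtain ⟨hg1, hg2⟩ := hg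
    obtain ⟨i, -, rfl⟩ := Finset.mem_image.1 hg1
    exact ⟨i, hg2⟩
  have huniq : ∀ (x : V) (i j : Fin n), x ∈ f i → x ∈ f j → i = j := by
    intro x i j hi hj
    by_contra hij
    have hfij : f i ≠ f j := fun h => hij (hf h)
    have hsub : ({f i, f j} : Finset (Finset V)) ⊆ D.groups.filter (fun g => x ∈ g) := by
      intro g hg
      rcases Finset.mem_insert.1 hg with rfl | hg
      · exact Finset.mem_filter.2 ⟨hgrp_mem i, hi⟩
      · rw [Finset.mem_singleton] at hg; subst hg
        exact Finset.mem_filter.2 ⟨hgrp_mem j, hj⟩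
    have hcard := Finset.card_le_card hsub
    rw [D.groupsPartition x, Finset.card_insert_of_notMem (by simp [hfij]),
      Finset.card_singleton] at hcard
    omega
  have hnoblock : ∀ (i : Fin n) (x y : V), x ∈ f i → y ∈ f i → x ≠ y →
      ∀ b ∈ D.blocks, ¬(x ∈ b ∧ y ∈ b) := by
    intro i x y hx hy hxy b hb hxb
    have hc := D.cover x y hxy
    have h1 : f i ∈ D.groups.filter (fun g => x ∈ g ∧ y ∈ g) :=
      Finset.mem_filter.2 ⟨hgrp_mem i, hx, hy⟩
    have h2 : b ∈ D.blocks.filter (fun b => x ∈ b ∧ y ∈ b) :=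
      Finset.mem_filter.2 ⟨hb, hxb⟩
    have hp1 := Finset.card_pos.2 ⟨_, h1⟩
    have hp2 := Finset.card_pos.2 ⟨_, h2⟩
    omega
  have hlineGrp : ∀ (i j : Fin n) (x : V), x ∈ f i → ∀ l ∈ L j, x ∈ l → j = i := by
    intro i j x hx l hl hxl
    exact huniq x j i (((hL j).1 l hl).1 hxl) hx
  have hopp : ∀ (i : Fin n) (x : V), x ∈ f i →
      oppLineIn P.lines Finset.univ x = oppLineIn (L i) (f i) x := by
    intro i x hx
    ext y
    simp only [oppLineIn, Finset.mem_filter, Finset.mem_univ, true_and]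
    constructor
    · rintro ⟨hyx, hno⟩
      have hyfi : y ∈ f i := by
        obtain ⟨j, hj⟩ := hex y
        rcases eq_or_ne j i with rfl | hji
        · exact hj
        · exfalso
          have hgc : D.groups.filter (fun g => x ∈ g ∧ y ∈ g) = ∅ := by
            rw [Finset.filter_eq_empty_iff]
            rintro g hg ⟨hxg, hyg⟩
            rw [hgroups] at hg
            obtain ⟨i', -, rfl⟩ := Finset.mem_image.1 hg
            have hii : i' = i := huniq x i' i hxg hx
            subst hii
            exact hji (huniq y j i' hj hyg)
          have hc := D.cover x y (fun h => hyx h.symm)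
          rw [hgc, Finset.card_empty] at hc
          have hbne : (D.blocks.filter fun b => x ∈ b ∧ y ∈ b).Nonempty := by
            rw [← Finset.card_pos]; omega
          obtain ⟨b, hb⟩ := hbne
          rw [Finset.mem_filter] at hb
          exact hno b (hlines ▸ Finset.mem_union_left _ hb.1) hb.2
      exact ⟨hyfi, hyx, fun l hl => hno l (hLsub i hl)⟩
    · rintro ⟨hyfi, hyx, hno⟩
      refine ⟨hyx, fun l hl hmem => ?_⟩
      rw [hlines, Finset.mem_union] at hl
      rcases hl with hb | hl
      · exact hnoblock i x y hx hyfi (fun h => hyx h.symm) l hb hmem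
      · obtain ⟨j, -, hlj⟩ := Finset.mem_biUnion.1 hl
        have hji : j = i := hlineGrp i j x hx l hlj hmem.1
        subst hji
        exact hno l hlj hmem
  have hmain : olpOrderedIn P.lines Finset.univ =
      Finset.univ.biUnion (fun i => olpOrderedIn (L i) (f i)) := by
    ext ⟨l, m⟩
    simp only [olpOrderedIn, Finset.mem_biUnion, Finset.mem_filter, Finset.mem_product,
      Finset.mem_univ, true_and]
    constructor
    · rintro ⟨⟨hl, hm⟩, hlm, h1, h2⟩
      have hlne : l.Nonempty := by
        rw [← Finset.card_pos, P.uniform l hl]; omega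
      obtain ⟨x, hx⟩ := hlne
      obtain ⟨i, hxi⟩ := hex x
      have hmLi : m ∈ L i := by
        rw [← h1 x hx, hopp i x hxi]
        exact (hL i).2.2.2 x hxi
      have hmsub : m ⊆ f i := ((hL i).1 m hmLi).1
      have hmne : m.Nonempty := by
        rw [← Finset.card_pos, ((hL i).1 m hmLi).2]; omega
      obtain ⟨y, hy⟩ := hmne
      have hlLi : l ∈ L i := by
        rw [← h2 y hy, hopp i y (hmsub hy)]
        exact (hL i).2.2.2 y (hmsub hy)
      have hlsub : l ⊆ f i := ((hL i).1 l hlLi).1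
      refine ⟨i, ⟨hlLi, hmLi⟩, hlm, ?_, ?_⟩
      · intro x' hx'; rw [← hopp i x' (hlsub hx')]; exact h1 x' hx'
      · intro y' hy'; rw [← hopp i y' (hmsub hy')]; exact h2 y' hy'
    · rintro ⟨i, ⟨hlLi, hmLi⟩, hlm, h1, h2⟩
      have hlsub := ((hL i).1 l hlLi).1
      have hmsub := ((hL i).1 m hmLi).1
      refine ⟨⟨hLsub i hlLi, hLsub i hmLi⟩, hlm, ?_, ?_⟩
      · intro x hx; rw [hopp i x (hlsub hx)]; exact h1 x hx
      · intro y hy; rw [hopp i y (hmsub hy)]; exact h2 y hy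
  rw [hmain]
  apply Finset.card_biUnion
  intro i _ j _ hij
  rw [Function.onFun, Finset.disjoint_left]
  rintro ⟨l, m⟩ hi hj2
  simp only [olpOrderedIn, Finset.mem_filter, Finset.mem_product] at hi hj2
  have hlLi := hi.1.1
  have hlLj := hj2.1.1
  have hlne : l.Nonempty := by
    rw [← Finset.card_pos, ((hL i).1 l hlLi).2]; omega
  obtain ⟨x, hx⟩ := hlne
  exact hij (huniq x i j (((hL i).1 l hlLi).1 hx) (((hL j).1 l hlLj).1 hx))
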